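/- For all reals p, T > 0 and A > 0 there exist constants C, R < ∞ such that for every integer N ≥ 1, Σ_{s ∈ N⁻¹ℤ_sym, s > R} (1 + s²)^N · e^{p s − N s² T / 2} ≤ C · e^{−A N}. -/
import Mathlib


open Classical

/-- The point of the lattice `N⁻¹ ℤ_sym` indexed by `k`, where `ℤ_sym = ℤ` for odd `N` and
`ℤ + 1/2` for even `N`. -/
noncomputable def latticePoint (N : ℕ) (k : ℤ) : ℝ :=
  ((k : ℝ) + (if Even N then (1 : ℝ) / 2 else 0)) / N

-- auxiliary: the fixed majorant over ℤ
lemma aux_summable : Summable (fun k : ℤ => if (1:ℤ) ≤ k then Real.exp (-(k:ℝ)) else 0) := by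
  rw [summable_int_iff_summable_nat_and_neg]
  constructor
  · apply Summable.of_nonneg_of_le (g := fun n : ℕ => if (1:ℤ) ≤ (n:ℤ) then Real.exp (-((n:ℤ):ℝ)) else 0)
      (fun n => by positivity) (f := fun n : ℕ => Real.exp (-1) ^ n)
    · intro n
      split_ifs with h
      · rw [← Real.exp_nat_mul]
        apply Real.exp_le_exp.2
        push_cast
        linarith
      · positivity
    · exact summable_geometric_of_lt_one (by positivity)
        (Real.exp_lt_one_iff.mpr (by norm_num))
  · have h0 : ∀ n : ℕ, ¬ ((1:ℤ) ≤ -(n:ℤ)) := fun n => by omega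
    simp only [if_neg (h0 _)]
    exact summable_zero

set_option maxHeartbeats 1000000 in
lemma key_bound (p T A : ℝ) (hp : 0 < p) (hT : 0 < T) (hA : 0 < A) (N : ℕ) (hN : 1 ≤ N)
    (s : ℝ) (hs : 1 + 16/T + 8*p/T + 8/T + Real.sqrt (8*A/T) < s) :
    (1 + s ^ 2) ^ N * Real.exp (p * s - (N : ℝ) * s ^ 2 * T / 2) ≤
      Real.exp (-A * N) * Real.exp (-((N : ℝ) * s)) := by
  have hsq := Real.sqrt_nonneg (8*A/T)
  have hN1 : (1:ℝ) ≤ (N:ℝ) := by exact_mod_cast hN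
  have hs1 : 1 < s := by
    have : (0:ℝ) ≤ 16/T := by positivity
    have : (0:ℝ) ≤ 8*p/T := by positivity
    have : (0:ℝ) ≤ 8/T := by positivity
    linarith
  have hTs16 : 16 ≤ T * s := by
    have h16 : 16/T ≤ s := by
      have : (0:ℝ) ≤ 8*p/T := by positivity
      have : (0:ℝ) ≤ 8/T := by positivity
      linarith
    rw [div_le_iff₀ hT] at h16; linarith [h16]
  have hTs8p : 8*p ≤ T * s := by
    have h8p : 8*p/T ≤ s := by
      have : (0:ℝ) ≤ 16/T := by positivity
      have : (0:ℝ) ≤ 8/T := by positivity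
      linarith
    rw [div_le_iff₀ hT] at h8p; linarith [h8p]
  have hA8 : 8*A ≤ T * s^2 := by
    have hle : Real.sqrt (8*A/T) ≤ s := by
      have : (0:ℝ) ≤ 16/T := by positivity
      have : (0:ℝ) ≤ 8*p/T := by positivity
      have : (0:ℝ) ≤ 8/T := by positivity
      linarith
    have hsq2 := Real.sq_sqrt (show (0:ℝ) ≤ 8*A/T by positivity)
    have : 8*A/T ≤ s^2 := by nlinarith
    rw [div_le_iff₀ hT] at this; linarith
  set x : ℝ := T * s^2 / 8 with hx
  have hx0 : 0 ≤ x := by positivity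
  have h1 : 1 + s^2 ≤ Real.exp x := by
    have e1 : (x/2 + 1)^2 ≤ (Real.exp (x/2))^2 :=
      pow_le_pow_left₀ (by positivity) (Real.add_one_le_exp (x/2)) 2
    have e2 : (Real.exp (x/2))^2 = Real.exp x := by
      rw [sq, ← Real.exp_add]; norm_num
    rw [e2] at e1
    -- x ≥ 2s since T*s ≥ 16 and s > 0
    have hx2s : 2*s ≤ x := by
      rw [hx]
      nlinarith
    nlinarith
  have hpow : (1 + s^2)^N ≤ Real.exp ((N:ℝ) * x) := by
    calc (1 + s^2)^N ≤ (Real.exp x)^N := pow_le_pow_left₀ (by positivity) h1 N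
    _ = Real.exp ((N:ℝ) * x) := (Real.exp_nat_mul x N).symm
  have hps : p * s ≤ (N:ℝ) * x := by
    have : p * s ≤ x := by rw [hx]; nlinarith
    nlinarith
  calc (1 + s^2)^N * Real.exp (p * s - (N:ℝ) * s^2 * T / 2)
      ≤ Real.exp ((N:ℝ)*x) * Real.exp (p * s - (N:ℝ) * s^2 * T / 2) := by
        apply mul_le_mul_of_nonneg_right hpow (Real.exp_nonneg _)
    _ = Real.exp ((N:ℝ)*x + (p * s - (N:ℝ) * s^2 * T / 2)) := (Real.exp_add _ _).symm
    _ ≤ Real.exp (-A * N + (-((N:ℝ) * s))) := by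
        apply Real.exp_le_exp.2
        have hsx : s ≤ T*s^2/8 := by nlinarith
        have hAx : A ≤ T*s^2/8 := by nlinarith
        have hN0 : (0:ℝ) ≤ (N:ℝ) := by linarith
        have key : (N:ℝ)*(A+s) ≤ (N:ℝ)*(T*s^2/4) :=
          mul_le_mul_of_nonneg_left (by linarith) hN0
        rw [hx]
        nlinarith [key, hps]
    _ = Real.exp (-A * N) * Real.exp (-((N:ℝ) * s)) := Real.exp_add _ _


/-- Tail estimate for sums over the lattice `N⁻¹ ℤ_sym`: the key step in the exponential bound
on the extreme particle of the discrete β-ensemble. -/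
theorem lattice_tail_sum_bound (p T A : ℝ) (hp : 0 < p) (hT : 0 < T) (hA : 0 < A) :
    ∃ C R : ℝ, ∀ N : ℕ, 1 ≤ N →
      (Summable fun k : ℤ =>
        if R < latticePoint N k then
          (1 + latticePoint N k ^ 2) ^ N *
            Real.exp (p * latticePoint N k - (N : ℝ) * latticePoint N k ^ 2 * T / 2)
        else 0) ∧
      (∑' k : ℤ,
          if R < latticePoint N k then
            (1 + latticePoint N k ^ 2) ^ N *
              Real.exp (p * latticePoint N k - (N : ℝ) * latticePoint N k ^ 2 * T / 2)
          else 0) ≤ C * Real.exp (-A * N) := by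
  classical
  set R : ℝ := 1 + 16/T + 8*p/T + 8/T + Real.sqrt (8*A/T) with hR
  set C : ℝ := ∑' k : ℤ, (if (1:ℤ) ≤ k then Real.exp (-(k:ℝ)) else 0) with hC
  refine ⟨C, R, fun N hN => ?_⟩
  have hN1 : (1:ℝ) ≤ (N:ℝ) := by exact_mod_cast hN
  have hNpos : (0:ℝ) < (N:ℝ) := by linarith
  set f : ℤ → ℝ := fun k =>
    if R < latticePoint N k then
      (1 + latticePoint N k ^ 2) ^ N *
        Real.exp (p * latticePoint N k - (N : ℝ) * latticePoint N k ^ 2 * T / 2)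
    else 0 with hf
  set g : ℤ → ℝ := fun k => Real.exp (-A * N) * (if (1:ℤ) ≤ k then Real.exp (-(k:ℝ)) else 0)
    with hg
  have hf0 : ∀ k, 0 ≤ f k := by
    intro k; rw [hf]; dsimp only; split_ifs
    · positivity
    · exact le_refl 0
  have hfg : ∀ k, f k ≤ g k := by
    intro k
    rw [hf, hg]; dsimp only
    by_cases h : R < latticePoint N k
    · rw [if_pos h]
      set s := latticePoint N k with hsdef
      have hNs : (N:ℝ) * s = (k:ℝ) + (if Even N then (1:ℝ)/2 else 0) := by
        rw [hsdef]; unfold latticePoint; field_simp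
      have hc0 : (0:ℝ) ≤ (if Even N then (1:ℝ)/2 else 0) := by split_ifs <;> norm_num
      have hc1 : (if Even N then (1:ℝ)/2 else 0) ≤ 1/2 := by split_ifs <;> norm_num
      have hsq := Real.sqrt_nonneg (8*A/T)
      have hs1 : 1 < s := by
        have : (0:ℝ) ≤ 16/T := by positivity
        have : (0:ℝ) ≤ 8*p/T := by positivity
        have : (0:ℝ) ≤ 8/T := by positivity
        rw [hR] at h; linarith
      have hk1 : (1:ℤ) ≤ k := by
        have hNs1 : 1 < (N:ℝ) * s := by nlinarith
        have : (1/2 : ℝ) < (k:ℝ) := by linarith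
        have : (0:ℝ) < (k:ℝ) := by linarith
        have : 0 < k := by exact_mod_cast this
        omega
      rw [if_pos hk1]
      have hbd := key_bound p T A hp hT hA N hN s (by rw [hR] at h; exact h)
      have hexp : Real.exp (-((N:ℝ) * s)) ≤ Real.exp (-(k:ℝ)) := by
        apply Real.exp_le_exp.2
        have : (k:ℝ) ≤ (N:ℝ) * s := by rw [hNs]; linarith
        linarith
      calc (1 + s ^ 2) ^ N * Real.exp (p * s - (N:ℝ) * s ^ 2 * T / 2)
          ≤ Real.exp (-A * N) * Real.exp (-((N:ℝ) * s)) := hbd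
        _ ≤ Real.exp (-A * N) * Real.exp (-(k:ℝ)) :=
            mul_le_mul_of_nonneg_left hexp (Real.exp_nonneg _)
    · rw [if_neg h]
      apply mul_nonneg (Real.exp_nonneg _)
      split_ifs <;> positivity
  have hgsum : Summable g := aux_summable.mul_left _
  have hfsum : Summable f := Summable.of_nonneg_of_le hf0 hfg hgsum
  refine ⟨hfsum, ?_⟩
  calc (∑' k, f k) ≤ ∑' k, g k := Summable.tsum_le_tsum hfg hfsum hgsum
    _ = Real.exp (-A * N) * C := by rw [hg, tsum_mul_left, hC]
    _ = C * Real.exp (-A * N) := mul_comm _ _
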